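/- arXiv:1608.04538 — 2 statements merged into one kernel-verified Lean document; each statement's English description precedes it below -/
import Mathlib

section
/- Let Γ be a finite directed graph. Every closed inverse subsemigroup of S(Γ) conjugate to a closed inverse subsemigroup of finite chain type is itself of finite chain type. Moreover, two closed inverse subsemigroups of finite chain type L = ↑{(u,u)} and K = ↑{(v,v)} are conjugate in S(Γ) if and only if they have the same root, i.e. the paths u and v have the same initial vertex. -/
/-- A (finite) directed graph: vertices, edges, and source/target maps. -/
structure DGraph where
  V : Type
  E : Type
  src : E → V
  tgt : E → V

namespace DGraph

/-- The vertex reached after traversing a list of edges from a vertex. -/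
def walkEnd (G : DGraph) : G.V → List G.E → G.V
  | v, [] => v
  | _, e :: l => walkEnd G (G.tgt e) l

/-- The list of edges forms a directed walk starting at the given vertex. -/
def IsWalk (G : DGraph) : G.V → List G.E → Prop
  | _, [] => True
  | v, e :: l => G.src e = v ∧ IsWalk G (G.tgt e) l

variable (G : DGraph)

@[simp] theorem walkEnd_nil (v : G.V) : G.walkEnd v [] = v := rfl
@[simp] theorem walkEnd_cons (v : G.V) (e : G.E) (l : List G.E) :
    G.walkEnd v (e :: l) = G.walkEnd (G.tgt e) l := rfl
@[simp] theorem isWalk_nil (v : G.V) : G.IsWalk v [] := trivial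
@[simp] theorem isWalk_cons (v : G.V) (e : G.E) (l : List G.E) :
    G.IsWalk v (e :: l) ↔ G.src e = v ∧ G.IsWalk (G.tgt e) l := Iff.rfl

theorem isWalk_append (v : G.V) (l1 l2 : List G.E) :
    G.IsWalk v (l1 ++ l2) ↔ G.IsWalk v l1 ∧ G.IsWalk (G.walkEnd v l1) l2 := by
  induction l1 generalizing v with
  | nil => simp [IsWalk, walkEnd]
  | cons e l ih => simp [IsWalk, walkEnd, ih, and_assoc]

/-- A directed path in `G`: an initial vertex together with a compatible
list of edges, traversed in order (empty paths are allowed). -/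
structure DPath (G : DGraph) where
  first : G.V
  edges : List G.E
  wf : G.IsWalk first edges

namespace DPath

variable {G}

/-- The terminal vertex of a directed path. -/
def last (p : G.DPath) : G.V := G.walkEnd p.first p.edges

/-- The list of vertices lying on a directed path. -/
def vertexList (p : G.DPath) : List G.V := p.first :: p.edges.map G.tgt

/-- `q` is a suffix (terminal segment) of `p`: `p = l ⬝ q` for some edge list `l`. -/
def IsSuffixOf (q p : G.DPath) : Prop :=
  ∃ l : List G.E, p.edges = l ++ q.edges ∧ q.first = G.walkEnd p.first l

end DPath

theorem isWalk_chopAppend {u v w : G.DPath} (hs : v.IsSuffixOf u) (hvw : v.first = w.first) :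
    G.IsWalk u.first (u.edges.take (u.edges.length - v.edges.length) ++ w.edges) := by
  obtain ⟨l, hl, hfst⟩ := hs
  rw [hl]
  have hlen : (l ++ v.edges).length - v.edges.length = l.length := by simp
  rw [hlen, List.take_left, G.isWalk_append]
  have hu := u.wf
  rw [hl, G.isWalk_append] at hu
  refine ⟨hu.1, ?_⟩
  rw [← hfst, hvw]
  exact w.wf

theorem isWalk_concat {p q : G.DPath} (h : q.first = p.last) :
    G.IsWalk p.first (p.edges ++ q.edges) := by
  rw [G.isWalk_append]
  refine ⟨p.wf, ?_⟩
  show G.IsWalk p.last q.edges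
  rw [← h]
  exact q.wf

/-- Concatenation of composable directed paths. -/
def concatPath (p q : G.DPath) (h : q.first = p.last) : G.DPath :=
  ⟨p.first, p.edges ++ q.edges, G.isWalk_concat h⟩

theorem isWalk_replicate (a : G.E) (h : G.tgt a = G.src a) (m : ℕ) :
    G.IsWalk (G.src a) (List.replicate m a) := by
  induction m with
  | zero => trivial
  | succ n ih => rw [List.replicate_succ, G.isWalk_cons]; exact ⟨rfl, by rw [h]; exact ih⟩

/-- The path traversing a loop `a` exactly `m` times. -/
def loopPow (a : G.E) (h : G.tgt a = G.src a) (m : ℕ) : G.DPath :=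
  ⟨G.src a, List.replicate m a, G.isWalk_replicate a h m⟩

/-- `p` is a nonempty directed circuit. -/
def IsCircuit (p : G.DPath) : Prop := p.edges ≠ [] ∧ p.last = p.first

/-- `p` and `d` share no nontrivial common prefix (initial segment). -/
def NoCommonPrefix (p d : G.DPath) : Prop :=
  ∀ l : List G.E, l ≠ [] → l <+: p.edges → ¬ l <+: d.edges

end DGraph

/-- The underlying set of the graph inverse semigroup `S(Γ)`: pairs of directed
paths with the same initial vertex, together with a zero element. -/
inductive GIS (G : DGraph) where
  | zero : GIS G
  | pair (a b : G.DPath) (h : a.first = b.first) : GIS G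

namespace GIS

open scoped Classical in
/-- The multiplication of the graph inverse semigroup:
`(t,u)(v,w) = (t,pw)` if `u = pv`, `(pt,w)` if `v = pu`, and `0` otherwise. -/
noncomputable def mul {G : DGraph} : GIS G → GIS G → GIS G
  | .zero, _ => .zero
  | .pair _ _ _, .zero => .zero
  | .pair t u h1, .pair v w h2 =>
    if hs : v.IsSuffixOf u then
      .pair t ⟨t.first, u.edges.take (u.edges.length - v.edges.length) ++ w.edges,
        by rw [h1]; exact G.isWalk_chopAppend hs h2⟩ rfl
    else if hs' : u.IsSuffixOf v then
      .pair ⟨v.first, v.edges.take (v.edges.length - u.edges.length) ++ t.edges,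
        G.isWalk_chopAppend hs' h1.symm⟩ w h2
    else .zero

noncomputable instance {G : DGraph} : Mul (GIS G) := ⟨GIS.mul⟩

/-- The inverse: `(v,w)⁻¹ = (w,v)` and `0⁻¹ = 0`. -/
def inv {G : DGraph} : GIS G → GIS G
  | .zero => .zero
  | .pair a b h => .pair b a h.symm

/-- The natural partial order: `x ≤ y` iff `x = e * y` for some idempotent `e`. -/
def le {G : DGraph} (x y : GIS G) : Prop := ∃ e : GIS G, e * e = e ∧ x = e * y

end GIS

/-- `L` is a closed inverse subsemigroup of `S(Γ)`: a nonempty subset closed under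
multiplication, inverses, and upward closed in the natural partial order. -/
def IsCISS (G : DGraph) (L : Set (GIS G)) : Prop :=
  L.Nonempty ∧ (∀ a ∈ L, ∀ b ∈ L, a * b ∈ L) ∧ (∀ a ∈ L, a.inv ∈ L) ∧
    (∀ a ∈ L, ∀ s : GIS G, GIS.le a s → s ∈ L)

/-- The closed inverse subsemigroup `↑{(u,u)}` of (finite) chain type:
all `(q,q)` with `q` a suffix of `u`. -/
def chainSet (G : DGraph) (u : G.DPath) : Set (GIS G) :=
  {x | ∃ q : G.DPath, q.IsSuffixOf u ∧ x = GIS.pair q q rfl}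

/-- The edge list of the `r`-th power of the path `p`. -/
def powEdges {G : DGraph} (p : G.DPath) (r : ℕ) : List G.E :=
  (List.replicate r p.edges).flatten

/-- The closed inverse subsemigroup of cycle type
`L_{p,d} = {(v p^r d, v p^s d) : r,s ≥ 0, v a suffix of p} ∪ {(q,q) : q a suffix of d}`. -/
def cycleSet (G : DGraph) (p d : G.DPath) : Set (GIS G) :=
  {x | (∃ (r s : ℕ) (v a b : G.DPath) (h : a.first = b.first),
          v.IsSuffixOf p ∧ x = GIS.pair a b h ∧
          a.first = v.first ∧ a.edges = v.edges ++ powEdges p r ++ d.edges ∧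
          b.first = v.first ∧ b.edges = v.edges ++ powEdges p s ++ d.edges) ∨
       (∃ q : G.DPath, q.IsSuffixOf d ∧ x = GIS.pair q q rfl)}

/-- `L` is a chain of idempotents: all elements are idempotent and any two are
comparable in the natural partial order. -/
def IsChainOfIdem (G : DGraph) (L : Set (GIS G)) : Prop :=
  (∀ x ∈ L, x * x = x) ∧ ∀ x ∈ L, ∀ y ∈ L, GIS.le x y ∨ GIS.le y x

/-- The set of right cosets `↑(Lt)` (for `t` with `t t⁻¹ ∈ L`) of a closed inverse
subsemigroup `L`. -/
def cosets (G : DGraph) (L : Set (GIS G)) : Set (Set (GIS G)) :=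
  {C | ∃ t : GIS G, t * t.inv ∈ L ∧ C = {s | ∃ x ∈ L, GIS.le (x * t) s}}

/-- `H` and `K` are conjugate: for some `s`, `s⁻¹Hs ⊆ K` and `sKs⁻¹ ⊆ H`. -/
def Conjugate (G : DGraph) (H K : Set (GIS G)) : Prop :=
  ∃ s : GIS G, (∀ h ∈ H, s.inv * h * s ∈ K) ∧ (∀ k ∈ K, s * k * s.inv ∈ H)

/-- The set of directed paths with initial vertex `v` whose first edge (if any)
is not an edge of `w`. -/
def Npaths (G : DGraph) (v : G.V) (w : G.DPath) : Set G.DPath :=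
  {t | t.first = v ∧ ∀ e, t.edges.head? = some e → e ∉ w.edges}

namespace DGraph

theorem walkEnd_append (G : DGraph) (v : G.V) (l1 l2 : List G.E) :
    G.walkEnd v (l1 ++ l2) = G.walkEnd (G.walkEnd v l1) l2 := by
  induction l1 generalizing v with
  | nil => rfl
  | cons e l ih => simp [walkEnd, ih]

namespace DPath

theorem ext' {G : DGraph} {p q : G.DPath} (h1 : p.first = q.first)
    (h2 : p.edges = q.edges) : p = q := by
  cases p; cases q; simp_all

theorem suffix_refl {G : DGraph} (p : G.DPath) : p.IsSuffixOf p :=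
  ⟨[], rfl, rfl⟩

end DPath
end DGraph

namespace GIS

open DGraph

variable {G : DGraph}

theorem pair_congr {a b a' b' : G.DPath} {h : a.first = b.first} {h' : a'.first = b'.first}
    (ha : a = a') (hb : b = b') : GIS.pair a b h = GIS.pair a' b' h' := by
  subst ha; subst hb; rfl

theorem pair_inj {a b a' b' : G.DPath} {h : a.first = b.first} {h' : a'.first = b'.first}
    (e : GIS.pair a b h = GIS.pair a' b' h') : a = a' ∧ b = b' := by
  injection e with h1 h2; exact ⟨h1, h2⟩

@[simp] theorem zero_mul (x : GIS G) : (GIS.zero : GIS G) * x = GIS.zero := rfl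

@[simp] theorem mul_zero (x : GIS G) : x * (GIS.zero : GIS G) = GIS.zero := by
  cases x <;> rfl

theorem take_of_decomp {α : Type} (l v : List α) :
    (l ++ v).take ((l ++ v).length - v.length) = l := by
  have : (l ++ v).length - v.length = l.length := by simp
  rw [this, List.take_left]

/-- Multiplication when `v` is a suffix of `u`, with an explicit decomposition. -/
theorem mul_left {t u v w : G.DPath} (h1 : t.first = u.first) (h2 : v.first = w.first)
    (l : List G.E)
    (hl : u.edges = l ++ v.edges) (hf : v.first = G.walkEnd u.first l)
    (wr : G.IsWalk t.first (l ++ w.edges)) :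
    GIS.pair t u h1 * GIS.pair v w h2 = GIS.pair t ⟨t.first, l ++ w.edges, wr⟩ rfl := by
  show GIS.mul _ _ = _
  rw [GIS.mul]
  rw [dif_pos ⟨l, hl, hf⟩]
  refine pair_congr rfl (DPath.ext' rfl ?_)
  show u.edges.take (u.edges.length - v.edges.length) ++ w.edges = l ++ w.edges
  rw [hl, take_of_decomp]

/-- Multiplication when `u` is a suffix of `v`, with an explicit decomposition. -/
theorem mul_right {t u v w : G.DPath} (h1 : t.first = u.first) (h2 : v.first = w.first)
    (l : List G.E)
    (hl : v.edges = l ++ u.edges) (hf : u.first = G.walkEnd v.first l)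
    (wr : G.IsWalk v.first (l ++ t.edges)) (h3 : v.first = w.first) :
    GIS.pair t u h1 * GIS.pair v w h2 = GIS.pair ⟨v.first, l ++ t.edges, wr⟩ w h3 := by
  show GIS.mul _ _ = _
  rw [GIS.mul]
  by_cases hs : v.IsSuffixOf u
  · obtain ⟨l', hl', hf'⟩ := hs
    have hlen : l.length = 0 ∧ l'.length = 0 := by
      have e1 := congrArg List.length hl
      have e2 := congrArg List.length hl'
      simp [List.length_append] at e1 e2
      omega
    have hl0 : l = [] := List.length_eq_zero_iff.mp hlen.1
    have hl0' : l' = [] := List.length_eq_zero_iff.mp hlen.2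
    subst hl0; subst hl0'
    simp only [List.nil_append] at hl hl' hf hf'
    rw [dif_pos ⟨[], by simp [hl'], hf'⟩]
    refine pair_congr (DPath.ext' ?_ ?_) (DPath.ext' ?_ ?_)
    · rw [h1]; exact hf
    · exact rfl
    · rw [h1, ← h2]; exact hf
    · show u.edges.take (u.edges.length - v.edges.length) ++ w.edges = w.edges
      rw [hl]; simp
  · rw [dif_neg hs, dif_pos ⟨l, hl, hf⟩]
    refine pair_congr (DPath.ext' rfl ?_) rfl
    show v.edges.take (v.edges.length - u.edges.length) ++ t.edges = l ++ t.edges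
    rw [hl, take_of_decomp]

theorem mul_pair_cases {t u v w : G.DPath} (h1 : t.first = u.first) (h2 : v.first = w.first)
    (h : GIS.pair t u h1 * GIS.pair v w h2 ≠ GIS.zero) :
    v.IsSuffixOf u ∨ u.IsSuffixOf v := by
  by_contra hc
  push_neg at hc
  apply h
  show GIS.mul _ _ = _
  rw [GIS.mul, dif_neg hc.1, dif_neg hc.2]

theorem zero_not_mem_chainSet (u : G.DPath) : (GIS.zero : GIS G) ∉ chainSet G u := by
  rintro ⟨q, _, h⟩
  cases h
theorem isWalk_prefix_path {P q : G.DPath} {l rest : List G.E} (hP : P.edges = l ++ rest)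
    (hq : q.first = G.walkEnd P.first l) : G.IsWalk P.first (l ++ q.edges) := by
  rw [G.isWalk_append]
  have h := P.wf
  rw [hP, G.isWalk_append] at h
  exact ⟨h.1, by rw [← hq]; exact q.wf⟩

theorem nil_of_append_eq_self {α : Type} {l a : List α} (h : l ++ a = a) : l = [] := by
  have hlen := congrArg List.length h
  rw [List.length_append] at hlen
  exact List.length_eq_zero_iff.mp (by omega)

theorem key1 {u a b c e : G.DPath} (hab : a.first = b.first) (hce : c.first = e.first)
    (h : GIS.pair a b hab * GIS.pair c e hce * GIS.pair b a hab.symm ∈ chainSet G u) :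
    c.edges = e.edges ∧
      (((∃ p, b.edges = p ++ c.edges ∧ c.first = G.walkEnd b.first p) ∧ a.IsSuffixOf u) ∨
       (∃ l, c.edges = l ++ b.edges ∧ b.first = G.walkEnd c.first l ∧
         ∃ m, u.edges = m ++ (l ++ a.edges) ∧ c.first = G.walkEnd u.first m)) := by
  obtain ⟨q, hqu, hpq⟩ := h
  have hinner : GIS.pair a b hab * GIS.pair c e hce ≠ GIS.zero := by
    intro h0; rw [h0, zero_mul] at hpq; cases hpq
  rcases mul_pair_cases _ _ hinner with ⟨p, hp, hfp⟩ | ⟨l, hl, hfl⟩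
  · -- c is a suffix of b
    have hwm : G.IsWalk a.first (p ++ e.edges) := by
      rw [hab]; exact isWalk_prefix_path hp (by rw [← hce]; exact hfp)
    have hm : GIS.pair a b hab * GIS.pair c e hce = GIS.pair a ⟨a.first, p ++ e.edges, hwm⟩ rfl :=
      mul_left hab hce p hp hfp hwm
    set m : G.DPath := ⟨a.first, p ++ e.edges, hwm⟩ with hm_def
    rw [hm] at hpq
    have houter : GIS.pair a m rfl * GIS.pair b a hab.symm ≠ GIS.zero := by
      rw [hpq]; exact fun h0 => by cases h0
    rcases mul_pair_cases _ _ houter with ⟨l', hl', hfl'⟩ | ⟨l', hl', hfl'⟩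
    · -- b suffix of m
      have hwr : G.IsWalk a.first (l' ++ a.edges) :=
        isWalk_prefix_path (P := m) hl' (hab.trans hfl')
      have h2 : GIS.pair a m rfl * GIS.pair b a hab.symm =
          GIS.pair a ⟨a.first, l' ++ a.edges, hwr⟩ rfl :=
        mul_left (t := a) (u := m) rfl hab.symm l' hl' hfl' hwr
      rw [h2] at hpq
      obtain ⟨hq1, hq2⟩ := pair_inj hpq
      have hae : l' ++ a.edges = a.edges := by
        have := congrArg DGraph.DPath.edges (hq2.trans hq1.symm); simpa using this
      have hl'nil : l' = [] := nil_of_append_eq_self hae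
      subst hl'nil
      rw [List.nil_append] at hl'
      have hme : p ++ e.edges = p ++ c.edges := by
        rw [show m.edges = p ++ e.edges from rfl] at hl'; rw [hl', hp]
      refine ⟨(List.append_cancel_left hme).symm, Or.inl ⟨⟨p, hp, hfp⟩, ?_⟩⟩
      rw [hq1]; exact hqu
    · -- m suffix of b
      have hwr : G.IsWalk b.first (l' ++ a.edges) :=
        isWalk_prefix_path hl' hfl'
      have h2 : GIS.pair a m rfl * GIS.pair b a hab.symm =
          GIS.pair ⟨b.first, l' ++ a.edges, hwr⟩ a hab.symm :=
        mul_right (t := a) (u := m) rfl hab.symm l' hl' hfl' hwr hab.symm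
      rw [h2] at hpq
      obtain ⟨hq1, hq2⟩ := pair_inj hpq
      have hae : l' ++ a.edges = a.edges := by
        have := congrArg DGraph.DPath.edges (hq1.trans hq2.symm); simpa using this
      have hl'nil : l' = [] := nil_of_append_eq_self hae
      subst hl'nil
      rw [List.nil_append] at hl'
      have hme : p ++ c.edges = p ++ e.edges := by
        rw [← hp, hl']
      refine ⟨List.append_cancel_left hme, Or.inl ⟨⟨p, hp, hfp⟩, ?_⟩⟩
      rw [hq2]; exact hqu
  · -- b suffix of c
    have hwal : G.IsWalk c.first (l ++ a.edges) :=
      isWalk_prefix_path hl (hab.trans hfl)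
    have hm : GIS.pair a b hab * GIS.pair c e hce = GIS.pair ⟨c.first, l ++ a.edges, hwal⟩ e hce :=
      mul_right hab hce l hl hfl hwal hce
    set al : G.DPath := ⟨c.first, l ++ a.edges, hwal⟩ with hal_def
    rw [hm] at hpq
    have houter : GIS.pair al e hce * GIS.pair b a hab.symm ≠ GIS.zero := by
      rw [hpq]; exact fun h0 => by cases h0
    rcases mul_pair_cases _ _ houter with ⟨l'', hl'', hf''⟩ | ⟨l'', hl'', hf''⟩
    · -- b suffix of e
      have hwr : G.IsWalk c.first (l'' ++ a.edges) := by
        rw [hce]; exact isWalk_prefix_path hl'' (hab.trans hf'')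
      have h2 : GIS.pair al e hce * GIS.pair b a hab.symm =
          GIS.pair al ⟨c.first, l'' ++ a.edges, hwr⟩ rfl :=
        mul_left (t := al) (u := e) hce hab.symm l'' hl'' hf'' hwr
      rw [h2] at hpq
      obtain ⟨hq1, hq2⟩ := pair_inj hpq
      have hll : l = l'' := by
        have h3 := congrArg DGraph.DPath.edges (hq1.trans hq2.symm)
        have h4 : l ++ a.edges = l'' ++ a.edges := h3
        exact List.append_cancel_right h4
      refine ⟨by rw [hl, hl'', ← hll], Or.inr ⟨l, hl, hfl, ?_⟩⟩
      rw [← hq1] at hqu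
      exact hqu
    · -- e suffix of b
      have hwr : G.IsWalk b.first (l'' ++ (l ++ a.edges)) :=
        isWalk_prefix_path (q := al) hl'' (show al.first = _ from hce.trans hf'')
      have h2 : GIS.pair al e hce * GIS.pair b a hab.symm =
          GIS.pair ⟨b.first, l'' ++ (l ++ a.edges), hwr⟩ a hab.symm :=
        mul_right (t := al) (u := e) hce hab.symm l'' hl'' hf'' hwr hab.symm
      rw [h2] at hpq
      obtain ⟨hq1, hq2⟩ := pair_inj hpq
      have hae : l'' ++ (l ++ a.edges) = a.edges := by
        have := congrArg DGraph.DPath.edges (hq1.trans hq2.symm); simpa using this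
      have hnil : l'' = [] ∧ l = [] := by
        have hlen := congrArg List.length hae
        simp only [List.length_append] at hlen
        exact ⟨List.length_eq_zero_iff.mp (by omega), List.length_eq_zero_iff.mp (by omega)⟩
      obtain ⟨h1n, h2n⟩ := hnil
      subst h1n; subst h2n
      rw [List.nil_append] at hl hl''
      refine ⟨by rw [hl, hl''], Or.inr ⟨[], hl, hfl, ?_⟩⟩
      rw [← hq2] at hqu
      obtain ⟨mm, hmm1, hmm2⟩ := hqu
      refine ⟨mm, by simpa using hmm1, ?_⟩
      have hcf : c.first = a.first := by rw [hab, hfl, G.walkEnd_nil]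
      rw [hcf]; exact hmm2

theorem mem_chainSet_self (u : G.DPath) : GIS.pair u u rfl ∈ chainSet G u :=
  ⟨u, ⟨[], rfl, rfl⟩, rfl⟩

theorem key2 {u a b : G.DPath} (hab : a.first = b.first) {l₀ : List G.E}
    (hl₀ : u.edges = l₀ ++ a.edges) (hf₀ : a.first = G.walkEnd u.first l₀)
    {v : G.DPath} (hv1 : v.first = u.first) (hv2 : v.edges = l₀ ++ b.edges) :
    GIS.pair b a hab.symm * GIS.pair u u rfl * GIS.pair a b hab = GIS.pair v v rfl := by
  have hwb : G.IsWalk u.first (l₀ ++ b.edges) :=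
    isWalk_prefix_path hl₀ (by rw [← hab]; exact hf₀)
  have h1 : GIS.pair b a hab.symm * GIS.pair u u rfl =
      GIS.pair ⟨u.first, l₀ ++ b.edges, hwb⟩ u rfl :=
    mul_right hab.symm rfl l₀ hl₀ hf₀ hwb rfl
  have hveq : (⟨u.first, l₀ ++ b.edges, hwb⟩ : G.DPath) = v :=
    DPath.ext' hv1.symm hv2.symm
  rw [h1, pair_congr (h' := hv1) hveq (rfl : u = u)]
  have hwb' : G.IsWalk v.first (l₀ ++ b.edges) := by rw [hv1]; exact hwb
  rw [mul_left hv1 hab l₀ hl₀ hf₀ hwb']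
  exact pair_congr rfl (show (⟨v.first, l₀ ++ b.edges, hwb'⟩ : G.DPath) = v from DPath.ext' rfl hv2.symm)

theorem idem_pair (w : G.DPath) : GIS.pair w w rfl * GIS.pair w w rfl = GIS.pair w w rfl :=
  (mul_left rfl rfl [] rfl rfl w.wf).trans (pair_congr rfl (show (⟨w.first, [] ++ w.edges, w.wf⟩ : G.DPath) = w from DPath.ext' rfl rfl))

theorem le_of_suffix {w q : G.DPath} (h : q.IsSuffixOf w) :
    GIS.le (GIS.pair w w rfl) (GIS.pair q q rfl) := by
  obtain ⟨m, hm, hf⟩ := h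
  have hwr : G.IsWalk w.first (m ++ q.edges) := isWalk_prefix_path hm hf
  refine ⟨GIS.pair w w rfl, idem_pair w, ?_⟩
  rw [mul_left rfl rfl m hm hf hwr]
  exact pair_congr rfl (show w = (⟨w.first, m ++ q.edges, hwr⟩ : G.DPath) from DPath.ext' rfl hm)
theorem conj_chain {u v : G.DPath} (h : u.first = v.first) {q : G.DPath} (hq : q.IsSuffixOf u) :
    GIS.pair v u h.symm * GIS.pair q q rfl * GIS.pair u v h = GIS.pair v v rfl := by
  obtain ⟨m, hm, hf⟩ := hq
  have hw1 : G.IsWalk v.first (m ++ q.edges) := by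
    rw [← h]; exact isWalk_prefix_path hm hf
  rw [mul_left (t := v) (u := u) h.symm rfl m hm hf hw1]
  have hw2 : G.IsWalk v.first ([] ++ v.edges) := v.wf
  rw [mul_left (t := v) (u := (⟨v.first, m ++ q.edges, hw1⟩ : G.DPath)) rfl h [] hm.symm h hw2]
  exact pair_congr rfl (show (⟨v.first, [] ++ v.edges, hw2⟩ : G.DPath) = v from DPath.ext' rfl rfl)

end GIS

/-- any closed inverse subsemigroup conjugate to one of finite chain
type is of finite chain type, and two finite chain type subsemigroups `↑{(u,u)}`,
`↑{(v,v)}` are conjugate iff they have the same root. -/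
theorem stmt_11 (G : DGraph) [Fintype G.V] [Fintype G.E] :
    (∀ (u : G.DPath) (M : Set (GIS G)), IsCISS G M →
      Conjugate G (chainSet G u) M → ∃ v : G.DPath, M = chainSet G v) ∧
    (∀ u v : G.DPath,
      Conjugate G (chainSet G u) (chainSet G v) ↔ u.first = v.first) := by
  constructor
  · intro u M hM hconj
    obtain ⟨s, hHM, hMH⟩ := hconj
    obtain ⟨k₀, hk₀⟩ := hM.1
    cases s with
    | zero => exact (GIS.zero_not_mem_chainSet u (hMH k₀ hk₀)).elim
    | pair a b hab =>
      cases k₀ with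
      | zero => exact (GIS.zero_not_mem_chainSet u (hMH _ hk₀)).elim
      | pair c e hce =>
        have hk1 : GIS.pair a b hab * GIS.pair c e hce * GIS.pair b a hab.symm ∈ chainSet G u :=
          hMH _ hk₀
        obtain ⟨-, hcase⟩ := GIS.key1 hab hce hk1
        obtain ⟨l₀, hl₀, hf₀⟩ : ∃ l₀, u.edges = l₀ ++ a.edges ∧ a.first = G.walkEnd u.first l₀ := by
          rcases hcase with ⟨-, hsuf⟩ | ⟨l, -, hfl, m, hmu, hfm⟩
          · exact hsuf
          · refine ⟨m ++ l, by rw [hmu, List.append_assoc], ?_⟩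
            rw [G.walkEnd_append, ← hfm, ← hfl]; exact hab
        have hwv : G.IsWalk u.first (l₀ ++ b.edges) :=
          GIS.isWalk_prefix_path hl₀ (by rw [← hab]; exact hf₀)
        refine ⟨⟨u.first, l₀ ++ b.edges, hwv⟩, Set.ext fun x => ⟨?_, ?_⟩⟩
        · intro hx
          cases x with
          | zero => exact (GIS.zero_not_mem_chainSet u (hMH _ hx)).elim
          | pair c' e' hc'e' =>
            have hk2 : GIS.pair a b hab * GIS.pair c' e' hc'e' * GIS.pair b a hab.symm ∈
                chainSet G u := hMH _ hx
            obtain ⟨hedge', hcase'⟩ := GIS.key1 hab hc'e' hk2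
            have hee : e' = c' := DGraph.DPath.ext' hc'e'.symm hedge'.symm
            refine ⟨c', ?_, GIS.pair_congr rfl hee⟩
            rcases hcase' with ⟨⟨p, hp, hfp⟩, -⟩ | ⟨l, hlc, hflc, m, hmu, hfm⟩
            · refine ⟨l₀ ++ p, ?_, ?_⟩
              · show l₀ ++ b.edges = (l₀ ++ p) ++ c'.edges
                rw [hp, List.append_assoc]
              · show c'.first = G.walkEnd u.first (l₀ ++ p)
                rw [G.walkEnd_append, ← hf₀, hab, ← hfp]
            · have hml : m ++ l = l₀ := by
                apply List.append_cancel_right (bs := a.edges)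
                rw [List.append_assoc, ← hmu, hl₀]
              refine ⟨m, ?_, hfm⟩
              show l₀ ++ b.edges = m ++ c'.edges
              rw [hlc, ← List.append_assoc, hml]
        · rintro ⟨q, hq, rfl⟩
          have hvv : GIS.pair b a hab.symm * GIS.pair u u rfl * GIS.pair a b hab ∈ M :=
            hHM _ (GIS.mem_chainSet_self u)
          rw [GIS.key2 hab hl₀ hf₀ (v := ⟨u.first, l₀ ++ b.edges, hwv⟩) rfl rfl] at hvv
          exact hM.2.2.2 _ hvv _ (GIS.le_of_suffix hq)
  · intro u v
    constructor
    · rintro ⟨s, hHK, hKH⟩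
      cases s with
      | zero => exact (GIS.zero_not_mem_chainSet u (hKH _ (GIS.mem_chainSet_self v))).elim
      | pair a b hab =>
        have hk1 : GIS.pair a b hab * GIS.pair v v rfl * GIS.pair b a hab.symm ∈ chainSet G u :=
          hKH _ (GIS.mem_chainSet_self v)
        obtain ⟨-, hcase⟩ := GIS.key1 hab rfl hk1
        obtain ⟨l₀, hl₀, hf₀⟩ : ∃ l₀, u.edges = l₀ ++ a.edges ∧ a.first = G.walkEnd u.first l₀ := by
          rcases hcase with ⟨-, hsuf⟩ | ⟨l, -, hfl, m, hmu, hfm⟩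
          · exact hsuf
          · refine ⟨m ++ l, by rw [hmu, List.append_assoc], ?_⟩
            rw [G.walkEnd_append, ← hfm, ← hfl]; exact hab
        have hwv : G.IsWalk u.first (l₀ ++ b.edges) :=
          GIS.isWalk_prefix_path hl₀ (by rw [← hab]; exact hf₀)
        have hww : GIS.pair b a hab.symm * GIS.pair u u rfl * GIS.pair a b hab ∈ chainSet G v :=
          hHK _ (GIS.mem_chainSet_self u)
        rw [GIS.key2 hab hl₀ hf₀ (v := ⟨u.first, l₀ ++ b.edges, hwv⟩) rfl rfl] at hww
        obtain ⟨q, ⟨m, hqm, hqf⟩, heq⟩ := hww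
        obtain ⟨hq1, -⟩ := GIS.pair_inj heq
        have hqm' : v.edges = m ++ (l₀ ++ b.edges) := by rw [← hq1] at hqm; exact hqm
        have hqf' : u.first = G.walkEnd v.first m := by rw [← hq1] at hqf; exact hqf
        have hm0 : m = [] := by
          rcases hcase with ⟨⟨p, hp, -⟩, -⟩ | ⟨l, hlv, -, m', hmu, -⟩
          · have h1 := congrArg List.length hqm'
            have h2 := congrArg List.length hp
            simp only [List.length_append] at h1 h2
            exact List.length_eq_zero_iff.mp (by omega)
          · have h1 := congrArg List.length hqm'
            have h2 := congrArg List.length hlv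
            have h3 := congrArg List.length hmu
            have h4 := congrArg List.length hl₀
            simp only [List.length_append] at h1 h2 h3 h4
            exact List.length_eq_zero_iff.mp (by omega)
        subst hm0
        rw [G.walkEnd_nil] at hqf'
        exact hqf'
    · intro h
      refine ⟨GIS.pair u v h, ?_, ?_⟩
      · rintro x ⟨q, hq, rfl⟩
        have e1 : (GIS.pair u v h).inv * GIS.pair q q rfl * GIS.pair u v h = GIS.pair v v rfl :=
          GIS.conj_chain h hq
        rw [e1]
        exact GIS.mem_chainSet_self v
      · rintro x ⟨q, hq, rfl⟩
        have e2 : GIS.pair u v h * GIS.pair q q rfl * (GIS.pair u v h).inv = GIS.pair u u rfl :=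
          GIS.conj_chain h.symm hq
        rw [e2]
        exact GIS.mem_chainSet_self u
end

section
/- Let Γ be a finite directed graph. Every closed inverse subsemigroup of S(Γ) conjugate to a closed inverse subsemigroup of infinite chain type is itself of infinite chain type. Moreover, two closed inverse subsemigroups L, K of infinite chain type are conjugate in S(Γ) if and only if there exist idempotents (s,s) ∈ L and (t,t) ∈ K such that for every directed path p in Γ, (ps,ps) ∈ L if and only if (pt,pt) ∈ K. -/
namespace Aux12

open DGraph GIS

variable {G : DGraph}

theorem path_ext {p q : G.DPath} (h1 : p.first = q.first) (h2 : p.edges = q.edges) : p = q := by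
  cases p; cases q; simp_all

@[simp] theorem concat_first (p q : G.DPath) (h : q.first = p.last) :
    (G.concatPath p q h).first = p.first := rfl
@[simp] theorem concat_edges (p q : G.DPath) (h : q.first = p.last) :
    (G.concatPath p q h).edges = p.edges ++ q.edges := rfl

theorem walkEnd_app (v : G.V) (l1 l2 : List G.E) :
    G.walkEnd v (l1 ++ l2) = G.walkEnd (G.walkEnd v l1) l2 := by
  induction l1 generalizing v with
  | nil => rfl
  | cons e l ih => simpa using ih (G.tgt e)

theorem sfx_refl (p : G.DPath) : p.IsSuffixOf p := ⟨[], (List.nil_append _).symm, rfl⟩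

theorem sfx_len {q p : G.DPath} (h : q.IsSuffixOf p) : q.edges.length ≤ p.edges.length := by
  obtain ⟨l, hl, -⟩ := h; simp [hl]

theorem sfx_eq_of_len {q p : G.DPath} (h : q.IsSuffixOf p)
    (hle : p.edges.length ≤ q.edges.length) : q = p := by
  obtain ⟨l, hl, hf⟩ := h
  have hl0 : l = [] := by
    have := congrArg List.length hl
    simp at this
    exact List.eq_nil_of_length_eq_zero (by omega)
  subst hl0
  exact path_ext (by simpa using hf) (by simpa using hl.symm)

theorem sfx_trans {a b c : G.DPath} (h1 : a.IsSuffixOf b) (h2 : b.IsSuffixOf c) :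
    a.IsSuffixOf c := by
  obtain ⟨l1, e1, f1⟩ := h1; obtain ⟨l2, e2, f2⟩ := h2
  exact ⟨l2 ++ l1, by simp [e2, e1], by rw [walkEnd_app, ← f2, f1]⟩

theorem take_decomp {α : Type} {l v u : List α} (h : u = l ++ v) :
    u.take (u.length - v.length) = l := by
  subst h
  have : (l ++ v).length - v.length = l.length := by simp
  rw [this, List.take_left]

theorem sfx_comp {a b c : G.DPath} (ha : a.IsSuffixOf c) (hb : b.IsSuffixOf c) :
    a.IsSuffixOf b ∨ b.IsSuffixOf a := by
  obtain ⟨l1, e1, f1⟩ := ha; obtain ⟨l2, e2, f2⟩ := hb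
  rcases le_total l1.length l2.length with hle | hle
  · right
    have htake : l2.take l1.length = l1 := by
      have h1 : (l1 ++ a.edges).take l1.length = l1 := List.take_left
      have h2 : (l2 ++ b.edges).take l1.length = l2.take l1.length := by
        rw [List.take_append_of_le_length hle]
      rw [← e1, e2] at h1
      rw [h1] at h2; exact h2.symm
    have hdrop : a.edges = l2.drop l1.length ++ b.edges := by
      have : l1 ++ a.edges = (l2.take l1.length ++ l2.drop l1.length) ++ b.edges := by
        rw [List.take_append_drop, ← e1, e2]
      rw [htake, List.append_assoc] at this
      exact List.append_cancel_left this
    refine ⟨l2.drop l1.length, hdrop, ?_⟩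
    have hrec : l1 ++ l2.drop l1.length = l2 := by
      have h := List.take_append_drop l1.length l2
      rw [htake] at h; exact h
    rw [f2, f1, ← walkEnd_app, hrec]
  · left
    have htake : l1.take l2.length = l2 := by
      have h1 : (l2 ++ b.edges).take l2.length = l2 := List.take_left
      have h2 : (l1 ++ a.edges).take l2.length = l1.take l2.length := by
        rw [List.take_append_of_le_length hle]
      rw [← e2, e1] at h1
      rw [h1] at h2; exact h2.symm
    have hdrop : b.edges = l1.drop l2.length ++ a.edges := by
      have : l2 ++ b.edges = (l1.take l2.length ++ l1.drop l2.length) ++ a.edges := by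
        rw [List.take_append_drop, ← e2, e1]
      rw [htake, List.append_assoc] at this
      exact List.append_cancel_left this
    refine ⟨l1.drop l2.length, hdrop, ?_⟩
    have hrec : l2 ++ l1.drop l2.length = l1 := by
      have h := List.take_append_drop l2.length l1
      rw [htake] at h; exact h
    rw [f1, f2, ← walkEnd_app, hrec]

theorem sfx_concat (q x : G.DPath) (hq : x.first = q.last) :
    x.IsSuffixOf (G.concatPath q x hq) := ⟨q.edges, rfl, hq⟩

theorem sfx_decomp {x c : G.DPath} (h : x.IsSuffixOf c) :
    ∃ (q : G.DPath) (hq : x.first = q.last), c = G.concatPath q x hq := by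
  obtain ⟨l, hl, hf⟩ := h
  have wl : G.IsWalk c.first l := by
    have hw := c.wf
    rw [hl, G.isWalk_append] at hw
    exact hw.1
  exact ⟨⟨c.first, l, wl⟩, hf, path_ext rfl hl⟩

theorem transfer {q q' x y : G.DPath} {hq : x.first = q.last} {hq' : x.first = q'.last}
    {gq : y.first = q.last} {gq' : y.first = q'.last}
    (h : (G.concatPath q' x hq').IsSuffixOf (G.concatPath q x hq)) :
    (G.concatPath q' y gq').IsSuffixOf (G.concatPath q y gq) := by
  obtain ⟨l, hl, hf⟩ := h
  simp only [concat_edges] at hl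
  rw [← List.append_assoc] at hl
  have he : q.edges = l ++ q'.edges := List.append_cancel_right hl
  exact ⟨l, by simp [he], hf⟩

@[simp] theorem zero_mul' (x : GIS G) : (zero : GIS G) * x = zero := rfl
@[simp] theorem mul_zero' (x : GIS G) : x * (zero : GIS G) = zero := by cases x <;> rfl
@[simp] theorem inv_pair (a b : G.DPath) (h : a.first = b.first) :
    (pair a b h : GIS G).inv = pair b a h.symm := rfl

theorem pair_ext {a b a' b' : G.DPath} {h : a.first = b.first} {h' : a'.first = b'.first}
    (ea : a = a') (eb : b = b') : (pair a b h : GIS G) = pair a' b' h' := by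
  subst ea; subst eb; rfl

open scoped Classical in
theorem mul_pp (t u v w : G.DPath) (h1 : t.first = u.first) (h2 : v.first = w.first) :
    (pair t u h1 : GIS G) * pair v w h2 =
      if hs : v.IsSuffixOf u then
        pair t ⟨t.first, u.edges.take (u.edges.length - v.edges.length) ++ w.edges,
          by rw [h1]; exact G.isWalk_chopAppend hs h2⟩ rfl
      else if hs' : u.IsSuffixOf v then
        pair ⟨v.first, v.edges.take (v.edges.length - u.edges.length) ++ t.edges,
          G.isWalk_chopAppend hs' h1.symm⟩ w h2
      else zero := rfl

theorem mul_eq1 {t u v w : G.DPath} {h1 : t.first = u.first} {h2 : v.first = w.first}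
    (hs : v.IsSuffixOf u) (z : G.DPath) (hzf : z.first = t.first)
    (hze : z.edges = u.edges.take (u.edges.length - v.edges.length) ++ w.edges) :
    (pair t u h1 : GIS G) * pair v w h2 = pair t z hzf.symm := by
  rw [mul_pp, dif_pos hs]
  exact pair_ext rfl (path_ext hzf.symm hze.symm)

theorem mul_eq2 {t u v w : G.DPath} {h1 : t.first = u.first} {h2 : v.first = w.first}
    (hns : ¬ v.IsSuffixOf u) (hs : u.IsSuffixOf v) (z : G.DPath) (hzf : z.first = v.first)
    (hze : z.edges = v.edges.take (v.edges.length - u.edges.length) ++ t.edges) :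
    (pair t u h1 : GIS G) * pair v w h2 = pair z w (hzf.trans h2) := by
  rw [mul_pp, dif_neg hns, dif_pos hs]
  exact pair_ext (path_ext hzf.symm hze.symm) rfl

theorem mul_eq0 {t u v w : G.DPath} {h1 : t.first = u.first} {h2 : v.first = w.first}
    (hns : ¬ v.IsSuffixOf u) (hns' : ¬ u.IsSuffixOf v) :
    (pair t u h1 : GIS G) * pair v w h2 = zero := by
  rw [mul_pp, dif_neg hns, dif_neg hns']

theorem pair_idem (a : G.DPath) (h : a.first = a.first) :
    (pair a a h : GIS G) * pair a a h = pair a a h := by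
  rw [mul_eq1 (sfx_refl a) a rfl (by simp)]

theorem idem_eq {p q : G.DPath} {h : p.first = q.first}
    (heq : (pair p q h : GIS G) * pair p q h = pair p q h) : p = q := by
  by_cases hs : p.IsSuffixOf q
  · rw [mul_pp, dif_pos hs] at heq
    injection heq with e1 e2
    have he : q.edges.take (q.edges.length - p.edges.length) ++ q.edges = q.edges :=
      congrArg DPath.edges e2
    have h0 : (q.edges.take (q.edges.length - p.edges.length)).length = 0 := by
      have := congrArg List.length he
      rw [List.length_append] at this
      omega
    rw [List.length_take] at h0
    have hlen : q.edges.length ≤ p.edges.length := by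
      have := sfx_len hs; omega
    exact sfx_eq_of_len hs hlen
  · by_cases hs' : q.IsSuffixOf p
    · rw [mul_pp, dif_neg hs, dif_pos hs'] at heq
      injection heq with e1 e2
      have he : p.edges.take (p.edges.length - q.edges.length) ++ p.edges = p.edges :=
        congrArg DPath.edges e1
      have h0 : (p.edges.take (p.edges.length - q.edges.length)).length = 0 := by
        have := congrArg List.length he
        rw [List.length_append] at this
        omega
      rw [List.length_take] at h0
      have hlen : p.edges.length ≤ q.edges.length := by
        have := sfx_len hs'; omega
      exact (sfx_eq_of_len hs' hlen).symm
    · rw [mul_pp, dif_neg hs, dif_neg hs'] at heq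
      cases heq

theorem le_of_sfx {a b : G.DPath} (hs : b.IsSuffixOf a) :
    GIS.le (pair a a rfl : GIS G) (pair b b rfl) := by
  refine ⟨pair a a rfl, pair_idem a rfl, ?_⟩
  obtain ⟨l, hl, -⟩ := id hs
  rw [mul_eq1 hs a rfl (by rw [take_decomp hl]; exact hl)]

theorem sfx_of_le {a b : G.DPath} {h : a.first = a.first} {h' : b.first = b.first}
    (hle : GIS.le (pair a a h : GIS G) (pair b b h')) : b.IsSuffixOf a := by
  obtain ⟨e, he, heq⟩ := hle
  cases e with
  | zero =>
    rw [zero_mul'] at heq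
    cases heq
  | pair c d hcd =>
    obtain rfl : c = d := idem_eq he
    by_cases hs : b.IsSuffixOf c
    · rw [mul_pp, dif_pos hs] at heq
      injection heq with e1 e2
      rwa [e1]
    · by_cases hs' : c.IsSuffixOf b
      · rw [mul_pp, dif_neg hs, dif_pos hs'] at heq
        injection heq with e1 e2
        rw [e2]
        exact sfx_refl b
      · rw [mul_pp, dif_neg hs, dif_neg hs'] at heq
        cases heq

theorem ML1 (x y : G.DPath) (hxy : x.first = y.first) (q : G.DPath) (hq : x.first = q.last) :
    (pair y x hxy.symm : GIS G) *
        pair (G.concatPath q x hq) (G.concatPath q x hq) rfl * pair x y hxy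
    = pair (G.concatPath q y (hxy.symm.trans hq)) (G.concatPath q y (hxy.symm.trans hq)) rfl := by
  set A := G.concatPath q x hq with hA
  set B := G.concatPath q y (hxy.symm.trans hq) with hB
  have hsx : x.IsSuffixOf A := sfx_concat q x hq
  have hBe : B.edges = A.edges.take (A.edges.length - x.edges.length) ++ y.edges := by
    rw [hB, hA]
    show q.edges ++ y.edges = _
    rw [show (G.concatPath q x hq).edges = q.edges ++ x.edges from rfl,
      take_decomp (rfl : q.edges ++ x.edges = q.edges ++ x.edges)]
  have step1 : (pair y x hxy.symm : GIS G) * pair A A rfl = pair B A rfl := by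
    by_cases hc : A.IsSuffixOf x
    · have h1 : A.edges.length ≤ x.edges.length := sfx_len hc
      have h2 : A.edges = q.edges ++ x.edges := rfl
      have hq0 : q.edges = [] := by
        have := congrArg List.length h2
        rw [List.length_append] at this
        exact List.eq_nil_of_length_eq_zero (by omega)
      have hqf : x.first = q.first := by
        have hql : q.last = q.first := by simp [DPath.last, hq0]
        rw [hq, hql]
      have hAf : A.first = y.first := by
        show q.first = y.first
        rw [← hqf, hxy]
      have hze : A.edges = x.edges.take (x.edges.length - A.edges.length) ++ A.edges := by
        have h3 : x.edges.length - A.edges.length = 0 := by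
          rw [h2, List.length_append, hq0]
          simp
        rw [h3, List.take_zero, List.nil_append]
      rw [mul_eq1 hc A hAf hze]
      refine pair_ext (path_ext ?_ ?_) rfl
      · show y.first = q.first
        rw [← hqf, hxy]
      · show y.edges = q.edges ++ y.edges
        rw [hq0, List.nil_append]
    · rw [mul_eq2 hc hsx B rfl hBe]
  have step2 : (pair B A rfl : GIS G) * pair x y hxy = pair B B rfl := by
    exact mul_eq1 hsx B rfl hBe
  rw [step1, step2]

theorem ML2 (x y : G.DPath) (hxy : x.first = y.first) {a : G.DPath} (ha : a.IsSuffixOf x) :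
    (pair y x hxy.symm : GIS G) * pair a a rfl * pair x y hxy = pair y y rfl := by
  obtain ⟨l, hl, hf⟩ := id ha
  have wz : G.IsWalk y.first x.edges := by rw [← hxy]; exact x.wf
  have step1 : (pair y x hxy.symm : GIS G) * pair a a rfl = pair y ⟨y.first, x.edges, wz⟩ rfl := by
    rw [mul_eq1 ha (⟨y.first, x.edges, wz⟩ : G.DPath)
      (show (⟨y.first, x.edges, wz⟩ : G.DPath).first = y.first from rfl)
      (by show x.edges = _; rw [take_decomp hl]; exact hl)]
  have hsx : x.IsSuffixOf (⟨y.first, x.edges, wz⟩ : G.DPath) :=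
    ⟨[], (List.nil_append _).symm, hxy⟩
  have step2 : (pair y (⟨y.first, x.edges, wz⟩ : G.DPath) rfl : GIS G) * pair x y hxy
      = pair y y rfl := by
    rw [mul_eq1 hsx y rfl (by show y.edges = x.edges.take (x.edges.length - x.edges.length) ++ y.edges; simp)]
  rw [step1, step2]

theorem ML3 (x y : G.DPath) (hxy : x.first = y.first) {a : G.DPath}
    (h1 : ¬ a.IsSuffixOf x) (h2 : ¬ x.IsSuffixOf a) :
    (pair y x hxy.symm : GIS G) * pair a a rfl * pair x y hxy = zero := by
  rw [mul_eq0 h1 h2, zero_mul']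

theorem ML4 {x y : G.DPath} {hxy : x.first = y.first} {c d : G.DPath} {h : c.first = d.first}
    {a : G.DPath} {h' : a.first = a.first}
    (heq : (pair y x hxy.symm : GIS G) * pair c d h * pair x y hxy = pair a a h') :
    c = d := by
  by_cases h1 : c.IsSuffixOf x
  · obtain ⟨l, hl, hf⟩ := id h1
    have wD : G.IsWalk y.first (l ++ d.edges) := by
      rw [G.isWalk_append]
      constructor
      · have hw := x.wf
        rw [hl, G.isWalk_append] at hw
        rw [← hxy]
        exact hw.1
      · have : G.walkEnd y.first l = d.first := by
          rw [← hxy, ← hf, ← h]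
        rw [this]
        exact d.wf
    set D : G.DPath := ⟨y.first, l ++ d.edges, wD⟩ with hD
    have hDe : D.edges = x.edges.take (x.edges.length - c.edges.length) ++ d.edges := by
      rw [take_decomp hl]
    rw [mul_eq1 h1 D (show D.first = y.first from rfl) hDe] at heq
    by_cases h2 : x.IsSuffixOf D
    · rw [mul_pp, dif_pos h2] at heq
      injection heq with e1 e2
      have h4 : D.edges.take (D.edges.length - x.edges.length) ++ y.edges = a.edges :=
        congrArg DPath.edges e2
      have h5 : y.edges = a.edges := congrArg DPath.edges e1
      have h0 : (D.edges.take (D.edges.length - x.edges.length)).length = 0 := by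
        have := congrArg List.length (h4.trans h5.symm)
        rw [List.length_append] at this
        omega
      rw [List.length_take] at h0
      have hDx : D.edges.length ≤ x.edges.length := by
        have := sfx_len h2; omega
      have hxD : x = D := sfx_eq_of_len h2 hDx
      have hdc : l ++ c.edges = l ++ d.edges := by
        rw [← hl, hxD]
      exact path_ext h (List.append_cancel_left hdc)
    · by_cases h3 : D.IsSuffixOf x
      · rw [mul_pp, dif_neg h2, dif_pos h3] at heq
        injection heq with e1 e2
        have h4 : x.edges.take (x.edges.length - D.edges.length) ++ y.edges = a.edges :=
          congrArg DPath.edges e1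
        have h5 : y.edges = a.edges := congrArg DPath.edges e2
        have h0 : (x.edges.take (x.edges.length - D.edges.length)).length = 0 := by
          have := congrArg List.length (h4.trans h5.symm)
          rw [List.length_append] at this
          omega
        rw [List.length_take] at h0
        have hxD : x.edges.length ≤ D.edges.length := by
          have := sfx_len h3; omega
        have hDx : D = x := sfx_eq_of_len h3 hxD
        have hdc : l ++ c.edges = l ++ d.edges := by
          rw [← hl, ← hDx]
        exact path_ext h (List.append_cancel_left hdc)
      · rw [mul_pp, dif_neg h2, dif_neg h3] at heq
        cases heq
  · by_cases h4 : x.IsSuffixOf c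
    · obtain ⟨l, hl, hf⟩ := id h4
      rw [mul_pp, dif_neg h1, dif_pos h4] at heq
      by_cases h5 : x.IsSuffixOf d
      · obtain ⟨l5, hl5, hf5⟩ := id h5
        rw [mul_pp, dif_pos h5] at heq
        injection heq with e1 e2
        have ha4 : c.edges.take (c.edges.length - x.edges.length) ++ y.edges = a.edges :=
          congrArg DPath.edges e1
        have ha5 : d.edges.take (d.edges.length - x.edges.length) ++ y.edges = a.edges :=
          congrArg DPath.edges e2
        have h6 := List.append_cancel_right (ha4.trans ha5.symm)
        rw [take_decomp hl, take_decomp hl5] at h6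
        exact path_ext h (by rw [hl, hl5, h6])
      · by_cases h6 : d.IsSuffixOf x
        · rw [mul_pp, dif_neg h5, dif_pos h6] at heq
          injection heq with e1 e2
          have ha5 : y.edges = a.edges := congrArg DPath.edges e2
          have ha4 : x.edges.take (x.edges.length - d.edges.length) ++
              (c.edges.take (c.edges.length - x.edges.length) ++ y.edges) = a.edges :=
            congrArg DPath.edges e1
          have hlen := congrArg List.length (ha4.trans ha5.symm)
          rw [List.length_append, List.length_append, List.length_take, List.length_take] at hlen
          have hd : d = x := sfx_eq_of_len h6 (by have := sfx_len h6; omega)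
          have hc : x = c := sfx_eq_of_len h4 (by have := sfx_len h4; omega)
          rw [← hc, hd]
        · rw [mul_pp, dif_neg h5, dif_neg h6] at heq
          cases heq
    · rw [mul_pp, dif_neg h1, dif_neg h4, zero_mul'] at heq
      cases heq

structure Nice (G : DGraph) (L : Set (GIS G)) : Prop where
  nz : (zero : GIS G) ∉ L
  idem : ∀ m ∈ L, ∃ a : G.DPath, m = pair a a rfl
  closed : ∀ a b : G.DPath, pair a a rfl ∈ L → b.IsSuffixOf a → pair b b rfl ∈ L
  comp : ∀ a b : G.DPath, pair a a rfl ∈ L → pair b b rfl ∈ L →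
    a.IsSuffixOf b ∨ b.IsSuffixOf a
  unb : ∀ n : ℕ, ∃ a : G.DPath, pair a a rfl ∈ L ∧ n ≤ a.edges.length

def toOpt {G : DGraph} : GIS G → Option (G.DPath × G.DPath)
  | zero => none
  | pair a b _ => some (a, b)

theorem toOpt_inj : Function.Injective (toOpt (G := G)) := by
  intro m1 m2 hm
  cases m1 with
  | zero =>
    cases m2 with
    | zero => rfl
    | pair a b hb => simp [toOpt] at hm
  | pair a b hb =>
    cases m2 with
    | zero => simp [toOpt] at hm
    | pair a' b' hb' =>
      simp only [toOpt, Option.some.injEq, Prod.mk.injEq] at hm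
      exact pair_ext hm.1 hm.2

theorem pathfin (G : DGraph) [Fintype G.V] [Fintype G.E] (n : ℕ) :
    {p : G.DPath | p.edges.length ≤ n}.Finite := by
  have h2 : {l : List G.E | l.length ≤ n}.Finite := List.finite_length_le _ n
  have hfin : ({v : G.V × List G.E | v.2.length ≤ n}).Finite := by
    have := Set.Finite.prod (Set.finite_univ : (Set.univ : Set G.V).Finite) h2
    exact this.subset (fun v hv => ⟨trivial, hv⟩)
  have hpre : {p : G.DPath | p.edges.length ≤ n} =
      (fun p : G.DPath => (p.first, p.edges)) ⁻¹' {v | v.2.length ≤ n} := rfl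
  rw [hpre]
  apply Set.Finite.preimage ?_ hfin
  intro p _ q _ hpq
  exact path_ext (congrArg Prod.fst hpq) (congrArg Prod.snd hpq)

def glen {G : DGraph} : GIS G → ℕ
  | zero => 0
  | pair a _ _ => a.edges.length

theorem inf_of_unb {S : Set (GIS G)}
    (h : ∀ n : ℕ, ∃ a : G.DPath, pair a a rfl ∈ S ∧ n ≤ a.edges.length) : S.Infinite := by
  by_contra hfin
  rw [Set.not_infinite] at hfin
  obtain ⟨N, hN⟩ := (hfin.image glen).bddAbove
  obtain ⟨a, ha, hlen⟩ := h (N + 1)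
  have hle : glen (pair a a rfl : GIS G) ≤ N := hN (Set.mem_image_of_mem glen ha)
  have : glen (pair a a rfl : GIS G) = a.edges.length := rfl
  omega

theorem nice_of {G : DGraph} [Fintype G.V] [Fintype G.E] {L : Set (GIS G)}
    (hC : IsCISS G L) (hch : IsChainOfIdem G L) (hinf : L.Infinite) : Nice G L := by
  have nz : (zero : GIS G) ∉ L := by
    intro h0
    have hall : ∀ s : GIS G, s ∈ L := fun s => hC.2.2.2 zero h0 s ⟨zero, rfl, rfl⟩
    have huniv : L = Set.univ := Set.eq_univ_of_forall hall
    have hGinf : Infinite (GIS G) := Set.infinite_univ_iff.mp (huniv ▸ hinf)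
    have hDinf : Infinite G.DPath := by
      haveI hOinf : Infinite (Option (G.DPath × G.DPath)) :=
        Infinite.of_injective toOpt toOpt_inj
      by_contra hne
      rw [not_infinite_iff_finite] at hne
      haveI := hne
      haveI := Fintype.ofFinite (G.DPath × G.DPath)
      exact not_finite (Option (G.DPath × G.DPath))
    obtain ⟨p, q, hne, hfst⟩ :=
      Finite.exists_ne_map_eq_of_infinite (fun p : G.DPath => p.first)
    exact hne (idem_eq (hch.1 (pair p q hfst) (hall _)))
  have idem : ∀ m ∈ L, ∃ a : G.DPath, m = pair a a rfl := by
    intro m hm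
    cases m with
    | zero => exact absurd hm nz
    | pair a b h =>
      obtain rfl : a = b := idem_eq (hch.1 _ hm)
      exact ⟨a, rfl⟩
  refine ⟨nz, idem, ?_, ?_, ?_⟩
  · exact fun a b ha hb => hC.2.2.2 _ ha _ (le_of_sfx hb)
  · exact fun a b ha hb => ((hch.2 _ ha _ hb).imp sfx_of_le sfx_of_le).symm
  · intro n
    by_contra hcon
    push_neg at hcon
    have hsub : L ⊆ (fun a : G.DPath => (pair a a rfl : GIS G)) '' {p | p.edges.length ≤ n} := by
      intro m hm
      obtain ⟨a, rfl⟩ := idem m hm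
      exact ⟨a, (hcon a hm).le, rfl⟩
    exact hinf (((pathfin G n).image _).subset hsub)

theorem part1 {G : DGraph} [Fintype G.V] [Fintype G.E] {L M : Set (GIS G)}
    (hC : IsCISS G L) (hch : IsChainOfIdem G L) (hinf : L.Infinite)
    (hM : IsCISS G M) (hconj : Conjugate G L M) :
    IsChainOfIdem G M ∧ M.Infinite := by
  have nL := nice_of hC hch hinf
  obtain ⟨σ, hLM, hML⟩ := hconj
  have nzM : (zero : GIS G) ∉ M := by
    intro h0
    have hz := hML zero h0
    rw [mul_zero', zero_mul'] at hz
    exact nL.nz hz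
  obtain ⟨x, y, hxy, rfl⟩ : ∃ (x y : G.DPath) (hxy : x.first = y.first), σ = pair x y hxy := by
    cases σ with
    | zero =>
      obtain ⟨m0, hm0⟩ := hC.1
      have hz := hLM m0 hm0
      rw [show (zero : GIS G).inv = zero from rfl, zero_mul', zero_mul'] at hz
      exact absurd hz nzM
    | pair x y hh => exact ⟨x, y, hh, rfl⟩
  have hinv : (pair x y hxy : GIS G).inv = pair y x hxy.symm := rfl
  have F1 : ∀ m ∈ M, ∃ c : G.DPath, m = pair c c rfl := by
    intro m hm
    cases m with
    | zero => exact absurd hm nzM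
    | pair c d hh =>
      have hLmem := hML _ hm
      rw [hinv] at hLmem
      obtain ⟨a, ha⟩ := nL.idem _ hLmem
      obtain rfl : c = d := ML4 (x := y) (y := x) (hxy := hxy.symm) ha
      exact ⟨c, rfl⟩
  have idemM : ∀ m ∈ M, m * m = m := by
    intro m hm
    obtain ⟨c, rfl⟩ := F1 m hm
    exact pair_idem c rfl
  have F2 : ∀ c : G.DPath, pair c c rfl ∈ M → c.IsSuffixOf y ∨ y.IsSuffixOf c := by
    intro c hc
    by_contra hcon
    push_neg at hcon
    have hmem := hML _ hc
    rw [hinv, show (pair x y hxy : GIS G) * pair c c rfl * pair y x hxy.symm = zero from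
      ML3 y x hxy.symm hcon.1 hcon.2] at hmem
    exact nL.nz hmem
  have F3 : ∀ (q : G.DPath) (hq : y.first = q.last),
      pair (G.concatPath q y hq) (G.concatPath q y hq) rfl ∈ M →
      pair (G.concatPath q x (hxy.trans hq)) (G.concatPath q x (hxy.trans hq)) rfl ∈ L := by
    intro q hq hmem
    have h2 := hML _ hmem
    rw [hinv, show (pair x y hxy : GIS G) * pair (G.concatPath q y hq) (G.concatPath q y hq) rfl *
          pair y x hxy.symm
        = pair (G.concatPath q x (hxy.trans hq)) (G.concatPath q x (hxy.trans hq)) rfl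
      from ML1 y x hxy.symm q hq] at h2
    exact h2
  have F3' : ∀ (q : G.DPath) (hq : x.first = q.last),
      pair (G.concatPath q x hq) (G.concatPath q x hq) rfl ∈ L →
      pair (G.concatPath q y (hxy.symm.trans hq)) (G.concatPath q y (hxy.symm.trans hq)) rfl ∈ M := by
    intro q hq hmem
    have h2 := hLM _ hmem
    rw [hinv, show (pair y x hxy.symm : GIS G) *
          pair (G.concatPath q x hq) (G.concatPath q x hq) rfl * pair x y hxy
        = pair (G.concatPath q y (hxy.symm.trans hq)) (G.concatPath q y (hxy.symm.trans hq)) rfl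
      from ML1 x y hxy q hq] at h2
    exact h2
  constructor
  · refine ⟨idemM, ?_⟩
    intro m1 hm1 m2 hm2
    obtain ⟨c, rfl⟩ := F1 m1 hm1
    obtain ⟨c', rfl⟩ := F1 m2 hm2
    have hcomp : c.IsSuffixOf c' ∨ c'.IsSuffixOf c := by
      rcases F2 c hm1 with h1 | h1 <;> rcases F2 c' hm2 with h2 | h2
      · exact sfx_comp h1 h2
      · exact Or.inl (sfx_trans h1 h2)
      · exact Or.inr (sfx_trans h2 h1)
      · obtain ⟨q, hq, rfl⟩ := sfx_decomp h1
        obtain ⟨q', hq', rfl⟩ := sfx_decomp h2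
        have m1L := F3 q hq hm1
        have m2L := F3 q' hq' hm2
        rcases nL.comp _ _ m1L m2L with h3 | h3
        · exact Or.inl (transfer h3)
        · exact Or.inr (transfer h3)
    rcases hcomp with hcc | hcc
    · exact Or.inr (le_of_sfx hcc)
    · exact Or.inl (le_of_sfx hcc)
  · apply inf_of_unb
    intro n
    obtain ⟨a, haL, hlen⟩ := nL.unb (n + x.edges.length)
    have hcomp : a.IsSuffixOf x ∨ x.IsSuffixOf a := by
      by_contra hcon
      push_neg at hcon
      have hmem := hLM _ haL
      rw [hinv, show (pair y x hxy.symm : GIS G) * pair a a rfl * pair x y hxy = zero from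
        ML3 x y hxy hcon.1 hcon.2] at hmem
      exact nzM hmem
    have hxa : x.IsSuffixOf a := by
      rcases hcomp with hh | hh
      · have hax : a = x := sfx_eq_of_len hh (by omega)
        rw [hax]
        exact sfx_refl x
      · exact hh
    obtain ⟨q, hq, rfl⟩ := sfx_decomp hxa
    refine ⟨G.concatPath q y (hxy.symm.trans hq), F3' q hq haL, ?_⟩
    rw [concat_edges, List.length_append] at hlen ⊢
    omega

theorem part2fwd {G : DGraph} {L K : Set (GIS G)}
    (nL : Nice G L) (nK : Nice G K) (hconj : Conjugate G L K) :
    ∃ s t : G.DPath, pair s s rfl ∈ L ∧ pair t t rfl ∈ K ∧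
      ∀ p : G.DPath,
        ((∃ h : s.first = p.last,
            pair (G.concatPath p s h) (G.concatPath p s h) rfl ∈ L) ↔
         (∃ h : t.first = p.last,
            pair (G.concatPath p t h) (G.concatPath p t h) rfl ∈ K)) := by
  obtain ⟨σ, hLK, hKL⟩ := hconj
  obtain ⟨x, y, hxy, rfl⟩ : ∃ (x y : G.DPath) (hxy : x.first = y.first), σ = pair x y hxy := by
    cases σ with
    | zero =>
      obtain ⟨a, ha, -⟩ := nL.unb 0
      have hz := hLK _ ha
      rw [show (zero : GIS G).inv = zero from rfl, zero_mul', zero_mul'] at hz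
      exact absurd hz nK.nz
    | pair x y hh => exact ⟨x, y, hh, rfl⟩
  have hinv : (pair x y hxy : GIS G).inv = pair y x hxy.symm := rfl
  have sx : pair x x rfl ∈ L := by
    obtain ⟨a, haL, hlen⟩ := nL.unb x.edges.length
    have hcomp : a.IsSuffixOf x ∨ x.IsSuffixOf a := by
      by_contra hcon
      push_neg at hcon
      have hmem := hLK _ haL
      rw [hinv, show (pair y x hxy.symm : GIS G) * pair a a rfl * pair x y hxy = zero from
        ML3 x y hxy hcon.1 hcon.2] at hmem
      exact nK.nz hmem
    rcases hcomp with hh | hh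
    · rwa [← sfx_eq_of_len hh hlen]
    · exact nL.closed a x haL hh
  have ty : pair y y rfl ∈ K := by
    obtain ⟨b, hbK, hlen⟩ := nK.unb y.edges.length
    have hcomp : b.IsSuffixOf y ∨ y.IsSuffixOf b := by
      by_contra hcon
      push_neg at hcon
      have hmem := hKL _ hbK
      rw [show (pair x y hxy : GIS G) * pair b b rfl * (pair x y hxy).inv = zero from
        ML3 y x hxy.symm hcon.1 hcon.2] at hmem
      exact nL.nz hmem
    rcases hcomp with hh | hh
    · rwa [← sfx_eq_of_len hh hlen]
    · exact nK.closed b y hbK hh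
  refine ⟨x, y, sx, ty, fun p => ⟨?_, ?_⟩⟩
  · rintro ⟨h, hmem⟩
    have h2 := hLK _ hmem
    rw [hinv, show (pair y x hxy.symm : GIS G) *
          pair (G.concatPath p x h) (G.concatPath p x h) rfl * pair x y hxy
        = pair (G.concatPath p y (hxy.symm.trans h)) (G.concatPath p y (hxy.symm.trans h)) rfl
      from ML1 x y hxy p h] at h2
    exact ⟨hxy.symm.trans h, h2⟩
  · rintro ⟨h, hmem⟩
    have h2 := hKL _ hmem
    rw [show (pair x y hxy : GIS G) *
          pair (G.concatPath p y h) (G.concatPath p y h) rfl * (pair x y hxy).inv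
        = pair (G.concatPath p x (hxy.trans h)) (G.concatPath p x (hxy.trans h)) rfl
      from ML1 y x hxy.symm p h] at h2
    exact ⟨hxy.trans h, h2⟩

theorem part2bwd {G : DGraph} {L K : Set (GIS G)}
    (nL : Nice G L) (nK : Nice G K)
    (hex : ∃ s t : G.DPath, pair s s rfl ∈ L ∧ pair t t rfl ∈ K ∧
      ∀ p : G.DPath,
        ((∃ h : s.first = p.last,
            pair (G.concatPath p s h) (G.concatPath p s h) rfl ∈ L) ↔
         (∃ h : t.first = p.last,
            pair (G.concatPath p t h) (G.concatPath p t h) rfl ∈ K))) :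
    Conjugate G L K := by
  obtain ⟨s, t, hsL, htK, hiff⟩ := hex
  have hst : s.first = t.first := by
    have hp : ∃ h : s.first = (⟨s.first, [], trivial⟩ : G.DPath).last,
        pair (G.concatPath ⟨s.first, [], trivial⟩ s h)
          (G.concatPath ⟨s.first, [], trivial⟩ s h) rfl ∈ L := by
      refine ⟨rfl, ?_⟩
      have hcs : G.concatPath ⟨s.first, [], trivial⟩ s rfl = s :=
        path_ext rfl (List.nil_append _)
      rw [hcs]
      exact hsL
    obtain ⟨h', -⟩ := (hiff _).mp hp
    exact h'.symm
  refine ⟨pair s t hst, ?_, ?_⟩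
  · intro m hm
    obtain ⟨a, rfl⟩ := nL.idem m hm
    rw [show (pair s t hst : GIS G).inv = pair t s hst.symm from rfl]
    rcases nL.comp a s hm hsL with hc | hc
    · rw [show (pair t s hst.symm : GIS G) * pair a a rfl * pair s t hst = pair t t rfl from
        ML2 s t hst hc]
      exact htK
    · obtain ⟨q, hq, rfl⟩ := sfx_decomp hc
      rw [show (pair t s hst.symm : GIS G) *
            pair (G.concatPath q s hq) (G.concatPath q s hq) rfl * pair s t hst
          = pair (G.concatPath q t (hst.symm.trans hq)) (G.concatPath q t (hst.symm.trans hq)) rfl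
        from ML1 s t hst q hq]
      obtain ⟨h', hmem'⟩ := (hiff q).mp ⟨hq, hm⟩
      exact hmem'
  · intro k hk
    obtain ⟨b, rfl⟩ := nK.idem k hk
    rcases nK.comp b t hk htK with hc | hc
    · rw [show (pair s t hst : GIS G) * pair b b rfl * (pair s t hst).inv = pair s s rfl from
        ML2 t s hst.symm hc]
      exact hsL
    · obtain ⟨q, hq, rfl⟩ := sfx_decomp hc
      rw [show (pair s t hst : GIS G) *
            pair (G.concatPath q t hq) (G.concatPath q t hq) rfl * (pair s t hst).inv
          = pair (G.concatPath q s (hst.trans hq)) (G.concatPath q s (hst.trans hq)) rfl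
        from ML1 t s hst.symm q hq]
      obtain ⟨h', hmem'⟩ := (hiff q).mpr ⟨hq, hk⟩
      exact hmem'

end Aux12

/-- any closed inverse subsemigroup conjugate to one of infinite chain
type is of infinite chain type, and two infinite chain type subsemigroups `L`, `K`
are conjugate iff there are idempotents `(s,s) ∈ L`, `(t,t) ∈ K` such that for every
path `p`: `(ps,ps) ∈ L ↔ (pt,pt) ∈ K`. -/
theorem stmt_12 (G : DGraph) [Fintype G.V] [Fintype G.E] :
    (∀ L M : Set (GIS G), IsCISS G L → IsChainOfIdem G L → L.Infinite →
      IsCISS G M → Conjugate G L M → IsChainOfIdem G M ∧ M.Infinite) ∧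
    (∀ L K : Set (GIS G), IsCISS G L → IsChainOfIdem G L → L.Infinite →
      IsCISS G K → IsChainOfIdem G K → K.Infinite →
      (Conjugate G L K ↔
        ∃ s t : G.DPath, GIS.pair s s rfl ∈ L ∧ GIS.pair t t rfl ∈ K ∧
          ∀ p : G.DPath,
            ((∃ h : s.first = p.last,
                GIS.pair (G.concatPath p s h) (G.concatPath p s h) rfl ∈ L) ↔
             (∃ h : t.first = p.last,
                GIS.pair (G.concatPath p t h) (G.concatPath p t h) rfl ∈ K)))) := by
  constructor
  · intro L M hL hLc hLi hM hconj
    exact Aux12.part1 hL hLc hLi hM hconj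
  · intro L K hL hLc hLi hK hKc hKi
    constructor
    · exact Aux12.part2fwd (Aux12.nice_of hL hLc hLi) (Aux12.nice_of hK hKc hKi)
    · exact Aux12.part2bwd (Aux12.nice_of hL hLc hLi) (Aux12.nice_of hK hKc hKi)
end
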